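/- Let ‖·‖ be a norm on c₀₀ satisfying the Schlumprecht implicit equation. Then for every n ≥ 1, ‖∑_{j=1}^n e_j‖ = n / log₂(n+1). -/

import Mathlib

open Filter Topology

/-- The coordinatewise restriction of a finitely supported sequence to a finite index set. -/
noncomputable def restrF (E : Finset ℕ) (ξ : ℕ →₀ ℝ) : ℕ →₀ ℝ :=
  Finsupp.filter (· ∈ E) ξ

/-- The sup-norm of a finitely supported sequence. -/
noncomputable def supNormF (ξ : ℕ →₀ ℝ) : ℝ := ⨆ i, |ξ i|

/-- The set of values appearing in the inner supremum of the Schlumprecht implicit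
equation: all numbers `(1/log₂(k+1)) ∑_{j<k} ‖E_j ξ‖` over chains `E 0 < ... < E (k-1)`
of nonempty finite sets with `k ≥ 2`. -/
noncomputable def schlumprechtSet (nrm : (ℕ →₀ ℝ) → ℝ) (ξ : ℕ →₀ ℝ) : Set ℝ :=
  {r | ∃ (k : ℕ) (E : ℕ → Finset ℕ), 2 ≤ k ∧
    (∀ j < k, (E j).Nonempty) ∧
    (∀ j, j + 1 < k → ∀ a ∈ E j, ∀ b ∈ E (j + 1), a < b) ∧
    r = (1 / Real.logb 2 (k + 1)) * ∑ j ∈ Finset.range k, nrm (restrF (E j) ξ)}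

/-- `nrm` is a norm on `c₀₀` satisfying the Schlumprecht implicit equation. -/
def IsSchlumprechtNorm (nrm : (ℕ →₀ ℝ) → ℝ) : Prop :=
  (∀ ξ η, nrm (ξ + η) ≤ nrm ξ + nrm η) ∧
  (∀ (c : ℝ) (ξ), nrm (c • ξ) = |c| * nrm ξ) ∧
  (∀ ξ, nrm ξ = 0 ↔ ξ = 0) ∧
  (∀ ξ, nrm ξ = max (supNormF ξ) (sSup (schlumprechtSet nrm ξ)))

namespace SchlAux

noncomputable def L (k : ℕ) : ℝ := Real.logb 2 (k + 1)

lemma L_pos {k : ℕ} (hk : 1 ≤ k) : 0 < L k := by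
  have : (1:ℝ) < k + 1 := by exact_mod_cast Nat.lt_succ_of_le hk
  exact Real.logb_pos one_lt_two this

lemma L_ge_one {k : ℕ} (hk : 1 ≤ k) : 1 ≤ L k := by
  have h2 : (2:ℝ) ≤ (k:ℝ) + 1 := by exact_mod_cast Nat.succ_le_succ hk
  have := Real.logb_le_logb_of_le (b := 2) one_lt_two (by norm_num) h2
  simpa [L, Real.logb_self_eq_one one_lt_two] using this

lemma L_one : L 1 = 1 := by
  have : ((1:ℕ):ℝ) + 1 = 2 := by norm_num
  rw [L, this, Real.logb_self_eq_one one_lt_two]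

lemma L_mono {j k : ℕ} (hjk : j ≤ k) : L j ≤ L k := by
  apply Real.logb_le_logb_of_le one_lt_two (by positivity)
  exact_mod_cast Nat.succ_le_succ hjk

lemma one_lt_L_two : 1 < L 2 := by
  have h : (2:ℝ) < ((2:ℕ):ℝ) + 1 := by norm_num
  have := Real.logb_lt_logb (b := 2) one_lt_two two_pos h
  rw [Real.logb_self_eq_one one_lt_two] at this
  exact this

lemma L_le_self {m : ℕ} (hm : 1 ≤ m) : L m ≤ m := by
  rw [L, Real.logb_le_iff_le_rpow one_lt_two (by positivity)]
  rw [Real.rpow_natCast]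
  have := Nat.lt_two_pow_self (n := m)
  exact_mod_cast Nat.succ_le_of_lt this

lemma inv_log2_le_L {k : ℕ} (hk : 2 ≤ k) : 1 / Real.log 2 ≤ L k := by
  have h3 : (3:ℝ) ≤ (k:ℝ) + 1 := by exact_mod_cast Nat.succ_le_succ hk
  have hlog3 : (1:ℝ) ≤ Real.log 3 := by
    rw [Real.le_log_iff_exp_le (by norm_num)]
    exact le_trans Real.exp_one_lt_d9.le (by norm_num)
  have h1 : (1:ℝ) ≤ Real.log ((k:ℝ)+1) :=
    le_trans hlog3 (Real.log_le_log (by norm_num) h3)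
  have hl2 : 0 < Real.log 2 := Real.log_pos one_lt_two
  rw [L, Real.logb, div_le_div_iff₀ hl2 hl2]
  nlinarith

/-- Submultiplicativity of `x ↦ log₂ (x+1)` on `[1, ∞)`. -/
lemma submult {x y : ℝ} (hx : 1 ≤ x) (hy : 1 ≤ y) :
    Real.logb 2 (x * y + 1) ≤ Real.logb 2 (x + 1) * Real.logb 2 (y + 1) := by
  set a := Real.logb 2 (x + 1) with ha
  set b := Real.logb 2 (y + 1) with hb
  have hxpos : (0:ℝ) < x + 1 := by linarith
  have hypos : (0:ℝ) < y + 1 := by linarith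
  have hxa : (2:ℝ) ^ a = x + 1 := Real.rpow_logb two_pos (by norm_num) hxpos
  have hyb : (2:ℝ) ^ b = y + 1 := Real.rpow_logb two_pos (by norm_num) hypos
  have ha1 : 1 ≤ a := by
    rw [ha]
    have := Real.logb_le_logb_of_le (b := 2) one_lt_two (by norm_num)
      (by linarith : (2:ℝ) ≤ x + 1)
    simpa [Real.logb_self_eq_one one_lt_two] using this
  have hb1 : 1 ≤ b := by
    rw [hb]
    have := Real.logb_le_logb_of_le (b := 2) one_lt_two (by norm_num)
      (by linarith : (2:ℝ) ≤ y + 1)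
    simpa [Real.logb_self_eq_one one_lt_two] using this
  rw [Real.logb_le_iff_le_rpow one_lt_two (by nlinarith)]
  set s := a - 1 with hs
  set t := b - 1 with ht
  have hs0 : 0 ≤ s := by rw [hs]; linarith
  have ht0 : 0 ≤ t := by rw [ht]; linarith
  set c := Real.log 2 with hc
  have hc0 : 0 < c := Real.log_pos one_lt_two
  have hc1 : c ≤ 1 := by
    have := Real.log_le_sub_one_of_pos (two_pos (α := ℝ))
    linarith
  set u := Real.exp (s * c) with hu
  set v := Real.exp (t * c) with hv
  set w := Real.exp (s * t * c) with hw
  have hu0 : 0 < u := Real.exp_pos _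
  have hv0 : 0 < v := Real.exp_pos _
  have hrw : ∀ z : ℝ, (2:ℝ) ^ z = Real.exp (z * c) := fun z => by
    rw [Real.rpow_def_of_pos two_pos, mul_comm]
  have hxu : x = 2 * u - 1 := by
    have h2 : (2:ℝ) ^ a = 2 * u := by
      rw [hrw a, hu, show a * c = c + s * c by rw [hs]; ring, Real.exp_add,
        Real.exp_log two_pos]
    linarith [hxa.symm.trans h2]
  have hyv : y = 2 * v - 1 := by
    have h2 : (2:ℝ) ^ b = 2 * v := by
      rw [hrw b, hv, show b * c = c + t * c by rw [ht]; ring, Real.exp_add,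
        Real.exp_log two_pos]
    linarith [hyb.symm.trans h2]
  have hab : (2:ℝ) ^ (a * b) = 2 * (u * v * w) := by
    rw [hrw (a*b), hu, hv, hw,
      show a * b * c = c + (s * c + (t * c + s * t * c)) by rw [hs, ht]; ring,
      Real.exp_add, Real.exp_add, Real.exp_add, Real.exp_log two_pos]
    ring
  rw [hab, hxu, hyv]
  have hu1 : 1 ≤ u := Real.one_le_exp (by positivity)
  have hv1 : 1 ≤ v := Real.one_le_exp (by positivity)
  have hw1 : 1 + s * t * c ≤ w := by
    have := Real.add_one_le_exp (s * t * c); rw [← hw] at this; linarith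
  have hu2 : u - 1 ≤ u * (s * c) := by
    have h1 : 1 - s * c ≤ Real.exp (-(s * c)) := by
      have := Real.add_one_le_exp (-(s * c)); linarith
    have h2 : u * Real.exp (-(s * c)) = 1 := by
      rw [hu, ← Real.exp_add]; simp
    nlinarith [mul_le_mul_of_nonneg_left h1 hu0.le]
  have hv2 : v - 1 ≤ v * (t * c) := by
    have h1 : 1 - t * c ≤ Real.exp (-(t * c)) := by
      have := Real.add_one_le_exp (-(t * c)); linarith
    have h2 : v * Real.exp (-(t * c)) = 1 := by
      rw [hv, ← Real.exp_add]; simp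
    nlinarith [mul_le_mul_of_nonneg_left h1 hv0.le]
  have h1 : (u - 1) * (v - 1) ≤ (u * (s * c)) * (v * (t * c)) :=
    mul_le_mul hu2 hv2 (by linarith) (by positivity)
  have h3 : (u * (s * c)) * (v * (t * c)) ≤ u * v * (s * t * c) := by
    nlinarith [mul_nonneg (mul_nonneg (mul_nonneg (mul_nonneg hu0.le hv0.le) hs0) ht0) hc0.le]
  have h2 : u * v * (1 + s * t * c) ≤ u * v * w :=
    mul_le_mul_of_nonneg_left hw1 (by positivity)
  nlinarith


open Finset in
lemma lemmaK {k m : ℕ} (hk : 2 ≤ k) (hm : 1 ≤ m) (b : ℕ → ℕ)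
    (hsum : ∑ j ∈ range k, b j ≤ m) :
    ∑ j ∈ range k, ((b j : ℝ) / L (b j)) ≤ L k * ((m:ℝ) / L m) := by
  classical
  have hLk : 0 < L k := L_pos (by omega)
  have hLm : 0 < L m := L_pos hm
  set S : Finset ℕ := (range k).filter (fun j => b j ≠ 0) with hS
  have hsub : S ⊆ range k := filter_subset _ _
  -- reduce sum to S
  have hred : ∑ j ∈ range k, ((b j : ℝ) / L (b j)) = ∑ j ∈ S, ((b j : ℝ) / L (b j)) := by
    rw [← Finset.sum_filter_ne_zero]
    apply Finset.sum_congr _ (fun _ _ => rfl)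
    rw [hS]
    apply Finset.filter_congr
    intro j hj
    constructor
    · intro hne hb0
      exact hne (by simp [hb0])
    · intro hb0
      have : (b j : ℝ) ≠ 0 := by exact_mod_cast hb0
      intro hz
      rw [div_eq_zero_iff] at hz
      rcases hz with h | h
      · exact this h
      · have : 1 ≤ b j := Nat.one_le_iff_ne_zero.2 hb0
        exact absurd h (ne_of_gt (L_pos this))
  rw [hred]
  rcases S.eq_empty_or_nonempty with hSe | hSne
  · rw [hSe]; simp; positivity
  set t := S.card with htdef
  have ht1 : 1 ≤ t := Finset.card_pos.2 hSne
  set σ := ∑ j ∈ S, b j with hσdef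
  have htσ : t ≤ σ := by
    calc t = ∑ _j ∈ S, 1 := by simp [htdef]
    _ ≤ σ := Finset.sum_le_sum (fun j hj => Nat.one_le_iff_ne_zero.2 (mem_filter.1 hj).2)
  have hσm : σ ≤ m := le_trans (Finset.sum_le_sum_of_subset hsub) hsum
  have hσ1 : 1 ≤ σ := le_trans ht1 htσ
  have hσR : (0:ℝ) < σ := by exact_mod_cast hσ1
  have htk : t ≤ k := by
    calc t ≤ (range k).card := Finset.card_le_card hsub
    _ = k := Finset.card_range k
  -- each b j on S is between 1 and m
  have hbj : ∀ j ∈ S, 1 ≤ b j ∧ b j ≤ m := by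
    intro j hj
    refine ⟨Nat.one_le_iff_ne_zero.2 (mem_filter.1 hj).2, ?_⟩
    exact le_trans (Finset.single_le_sum (f := fun j => b j) (fun i _ => Nat.zero_le _) hj) hσm
  -- Step 1: per-term submultiplicativity bound
  have step1 : ∑ j ∈ S, ((b j : ℝ) / L (b j)) ≤
      (∑ j ∈ S, (b j : ℝ) * Real.logb 2 ((m:ℝ) / (b j) + 1)) / L m := by
    rw [Finset.sum_div]
    apply Finset.sum_le_sum
    intro j hj
    obtain ⟨hb1, hbm⟩ := hbj j hj
    have hbR : (1:ℝ) ≤ (b j : ℝ) := by exact_mod_cast hb1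
    have hbR0 : (0:ℝ) < (b j : ℝ) := by linarith
    have hyR : (1:ℝ) ≤ (m:ℝ) / (b j) := by
      rw [le_div_iff₀ hbR0]; simpa using (by exact_mod_cast hbm : (b j:ℝ) ≤ (m:ℝ))
    have hsub2 := submult hbR hyR
    rw [mul_div_cancel₀ _ (ne_of_gt hbR0)] at hsub2
    -- hsub2 : L m ≤ L (b j) * logb 2 (m/bj + 1)
    have hLb : 0 < L (b j) := L_pos hb1
    have hlogb : 0 < Real.logb 2 ((m:ℝ)/(b j) + 1) := Real.logb_pos one_lt_two (by linarith)
    rw [div_le_div_iff₀ hLb hLm]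
    calc (b j : ℝ) * L m ≤ (b j : ℝ) * (L (b j) * Real.logb 2 ((m:ℝ)/(b j) + 1)) := by
          apply mul_le_mul_of_nonneg_left _ (by linarith)
          exact hsub2
    _ = (b j : ℝ) * Real.logb 2 ((m:ℝ)/(b j) + 1) * L (b j) := by ring
  -- Step 2: Jensen for log
  have step2 : ∑ j ∈ S, (b j : ℝ) * Real.logb 2 ((m:ℝ) / (b j) + 1) ≤
      (σ:ℝ) * Real.logb 2 (((t:ℝ) * m + σ) / σ) := by
    have hconc := strictConcaveOn_log_Ioi.concaveOn
    have hjensen := hconc.le_map_sum (t := S) (w := fun j => (b j : ℝ) / σ)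
      (p := fun j => (m:ℝ) / (b j) + 1)
      (fun j hj => by positivity)
      (by rw [← Finset.sum_div]; rw [div_eq_one_iff_eq (ne_of_gt hσR)]
          exact_mod_cast rfl)
      (fun j hj => by
        have h1 : (0:ℝ) < (b j:ℝ) := by exact_mod_cast (hbj j hj).1
        exact Set.mem_Ioi.2 (by positivity))
    simp only [smul_eq_mul] at hjensen
    have hsum_pts : ∑ j ∈ S, ((b j : ℝ) / σ) * ((m:ℝ) / (b j) + 1) = ((t:ℝ) * m + σ) / σ := by
      have : ∀ j ∈ S, ((b j : ℝ) / σ) * ((m:ℝ) / (b j) + 1) = ((m:ℝ) + b j) / σ := by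
        intro j hj
        have hb0 : (0:ℝ) < (b j:ℝ) := by exact_mod_cast (hbj j hj).1
        field_simp
      rw [Finset.sum_congr rfl this, ← Finset.sum_div]
      congr 1
      rw [Finset.sum_add_distrib, Finset.sum_const, nsmul_eq_mul]
      have hcs : ∑ j ∈ S, (b j : ℝ) = (σ:ℝ) := by rw [hσdef]; push_cast; rfl
      rw [hcs, htdef]
    rw [hsum_pts] at hjensen
    -- convert logb to log
    have hc0 : 0 < Real.log 2 := Real.log_pos one_lt_two
    have : ∑ j ∈ S, (b j : ℝ) * Real.logb 2 ((m:ℝ) / (b j) + 1)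
        = (σ / Real.log 2) * ∑ j ∈ S, ((b j : ℝ)/σ) * Real.log ((m:ℝ) / (b j) + 1) := by
      rw [Finset.mul_sum]
      apply Finset.sum_congr rfl
      intro j hj
      rw [Real.logb]
      field_simp
    rw [this, Real.logb]
    rw [show (σ:ℝ) * (Real.log (((t:ℝ) * m + σ) / σ) / Real.log 2)
        = (σ / Real.log 2) * Real.log (((t:ℝ) * m + σ) / σ) by ring]
    apply mul_le_mul_of_nonneg_left hjensen (by positivity)
  -- Step 3
  have step3 : (σ:ℝ) * Real.logb 2 (((t:ℝ) * m + σ) / σ) ≤ (m:ℝ) * L k := by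
    have hmR : (0:ℝ) < m := by exact_mod_cast hm
    have h1 : ((t:ℝ) * m + σ) / σ ≤ ((k:ℝ) + 1) * ((m:ℝ)/σ) := by
      rw [div_le_iff₀ hσR]
      have htkR : (t:ℝ) ≤ k := by exact_mod_cast htk
      have hσmR : (σ:ℝ) ≤ m := by exact_mod_cast hσm
      have : ((k:ℝ)+1) * ((m:ℝ)/σ) * σ = ((k:ℝ)+1) * m := by field_simp
      rw [this]
      nlinarith
    have h2 : Real.logb 2 (((t:ℝ) * m + σ) / σ) ≤ L k + Real.logb 2 ((m:ℝ)/σ) := by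
      have hpos : (0:ℝ) < ((t:ℝ) * m + σ) / σ := by positivity
      calc Real.logb 2 (((t:ℝ) * m + σ) / σ) ≤ Real.logb 2 (((k:ℝ) + 1) * ((m:ℝ)/σ)) :=
            Real.logb_le_logb_of_le one_lt_two hpos h1
      _ = L k + Real.logb 2 ((m:ℝ)/σ) := by
            rw [Real.logb_mul (by positivity) (by positivity)]; rfl
    have h3 : (σ:ℝ) * Real.logb 2 ((m:ℝ)/σ) ≤ ((m:ℝ) - σ) * L k := by
      have hmσ : (1:ℝ) ≤ (m:ℝ)/σ := by
        rw [le_div_iff₀ hσR]; simpa using (by exact_mod_cast hσm : (σ:ℝ) ≤ (m:ℝ))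
      have hlog : Real.log ((m:ℝ)/σ) ≤ (m:ℝ)/σ - 1 :=
        Real.log_le_sub_one_of_pos (by linarith)
      have hc0 : 0 < Real.log 2 := Real.log_pos one_lt_two
      have h4 : (σ:ℝ) * Real.logb 2 ((m:ℝ)/σ) ≤ ((m:ℝ) - σ) / Real.log 2 := by
        rw [Real.logb]
        rw [div_eq_mul_inv ((m:ℝ) - σ)]
        have : (σ:ℝ) * (Real.log ((m:ℝ)/σ) / Real.log 2)
            = (σ * Real.log ((m:ℝ)/σ)) * (Real.log 2)⁻¹ := by ring
        rw [this]
        apply mul_le_mul_of_nonneg_right _ (by positivity)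
        calc (σ:ℝ) * Real.log ((m:ℝ)/σ) ≤ σ * ((m:ℝ)/σ - 1) :=
              mul_le_mul_of_nonneg_left hlog (by positivity)
        _ = (m:ℝ) - σ := by field_simp
      have h5 : ((m:ℝ) - σ) / Real.log 2 ≤ ((m:ℝ) - σ) * L k := by
        have hinv := inv_log2_le_L hk
        have hmσ0 : (0:ℝ) ≤ (m:ℝ) - σ := by
          have : (σ:ℝ) ≤ m := by exact_mod_cast hσm
          linarith
        calc ((m:ℝ) - σ) / Real.log 2 = ((m:ℝ) - σ) * (1 / Real.log 2) := by ring
        _ ≤ ((m:ℝ) - σ) * L k := mul_le_mul_of_nonneg_left hinv hmσ0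
      linarith
    calc (σ:ℝ) * Real.logb 2 (((t:ℝ) * m + σ) / σ) ≤ σ * (L k + Real.logb 2 ((m:ℝ)/σ)) := by
          apply mul_le_mul_of_nonneg_left h2 (by positivity)
    _ = σ * L k + σ * Real.logb 2 ((m:ℝ)/σ) := by ring
    _ ≤ σ * L k + ((m:ℝ) - σ) * L k := by linarith
    _ = (m:ℝ) * L k := by ring
  calc ∑ j ∈ S, ((b j : ℝ) / L (b j))
      ≤ (∑ j ∈ S, (b j : ℝ) * Real.logb 2 ((m:ℝ) / (b j) + 1)) / L m := step1
  _ ≤ ((σ:ℝ) * Real.logb 2 (((t:ℝ) * m + σ) / σ)) / L m := by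
      gcongr
  _ ≤ ((m:ℝ) * L k) / L m := by gcongr
  _ = L k * ((m:ℝ) / L m) := by ring


noncomputable def xA (A : Finset ℕ) : ℕ →₀ ℝ := ∑ j ∈ A, Finsupp.single j 1

lemma xA_apply (A : Finset ℕ) (i : ℕ) : xA A i = if i ∈ A then 1 else 0 := by
  classical
  rw [xA, Finset.sum_apply']
  simp [Finsupp.single_apply]

lemma restr_xA (E A : Finset ℕ) : restrF E (xA A) = xA (A ∩ E) := by
  classical
  ext i
  rw [restrF, Finsupp.filter_apply, xA_apply, xA_apply]
  by_cases h1 : i ∈ E <;> by_cases h2 : i ∈ A <;> simp [h1, h2, Finset.mem_inter]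

lemma xA_empty : xA ∅ = 0 := by simp [xA]

lemma xA_singleton (a : ℕ) : xA {a} = Finsupp.single a 1 := by simp [xA]

section
variable {nrm : (ℕ →₀ ℝ) → ℝ} (h : IsSchlumprechtNorm nrm)

include h

lemma nrm_zero : nrm 0 = 0 := (h.2.2.1 0).2 rfl

lemma nrm_nonneg (ξ : ℕ →₀ ℝ) : 0 ≤ nrm ξ := by
  have h1 := h.1 ξ (-ξ)
  have h2 : nrm (-ξ) = nrm ξ := by
    have := h.2.1 (-1) ξ
    simpa using this
  have h3 : ξ + -ξ = 0 := by simp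
  rw [h3, nrm_zero h, h2] at h1
  linarith

lemma nrm_sum_le {α : Type*} (F : Finset α) (g : α → (ℕ →₀ ℝ)) :
    nrm (∑ j ∈ F, g j) ≤ ∑ j ∈ F, nrm (g j) := by
  classical
  induction F using Finset.induction_on with
  | empty => simp [nrm_zero h]
  | insert _ _ hx ih =>
    rename_i a s
    rw [Finset.sum_insert hx, Finset.sum_insert hx]
    exact le_trans (h.1 _ _) (by linarith)

lemma nrm_single (i : ℕ) (c : ℝ) : nrm (Finsupp.single i c) = |c| * nrm (Finsupp.single i 1) := by
  rw [← h.2.1 c (Finsupp.single i 1), Finsupp.smul_single, smul_eq_mul, mul_one]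

omit h

/-- transitive version of the chain condition -/
lemma chain_lt {k : ℕ} {E : ℕ → Finset ℕ} (hne : ∀ j < k, (E j).Nonempty)
    (hord : ∀ j, j + 1 < k → ∀ a ∈ E j, ∀ b ∈ E (j + 1), a < b) :
    ∀ j2, j2 < k → ∀ j1, j1 < j2 → ∀ a ∈ E j1, ∀ b ∈ E j2, a < b := by
  intro j2
  induction j2 with
  | zero => omega
  | succ n ih =>
    intro hn1k j1 hj1 a ha b hb
    rcases Nat.lt_succ_iff_lt_or_eq.1 hj1 with hlt | heq
    · obtain ⟨c, hc⟩ := hne n (by omega)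
      exact lt_trans (ih (by omega) j1 hlt a ha c hc) (hord n hn1k c hc b hb)
    · subst heq
      exact hord j1 hn1k a ha b hb

lemma chain_disjoint {k : ℕ} {E : ℕ → Finset ℕ} (hne : ∀ j < k, (E j).Nonempty)
    (hord : ∀ j, j + 1 < k → ∀ a ∈ E j, ∀ b ∈ E (j + 1), a < b)
    (A : Finset ℕ) :
    ∀ j1 < k, ∀ j2 < k, j1 ≠ j2 → Disjoint (A ∩ E j1) (A ∩ E j2) := by
  intro j1 hj1 j2 hj2 hne12
  rw [Finset.disjoint_left]
  intro a ha1 ha2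
  rw [Finset.mem_inter] at ha1 ha2
  rcases Nat.lt_or_ge j1 j2 with hlt | hge
  · exact absurd (chain_lt hne hord j2 hj2 j1 hlt a ha1.2 a ha2.2) (lt_irrefl a)
  · have hlt : j2 < j1 := by omega
    exact absurd (chain_lt hne hord j1 hj1 j2 hlt a ha2.2 a ha1.2) (lt_irrefl a)

include h

/-- every element of the Schlumprecht set of `xA A` is at most `C_A / L 2`. -/
lemma schl_bound (A : Finset ℕ) :
    ∀ r ∈ schlumprechtSet nrm (xA A), r ≤ (∑ i ∈ A, nrm (Finsupp.single i 1)) / L 2 := by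
  classical
  rintro r ⟨k, E, hk, hne, hord, rfl⟩
  have hL2 : 0 < L 2 := L_pos (by norm_num)
  have hLk : 0 < L k := L_pos (by omega)
  have hdisj := chain_disjoint hne hord A
  set T := ∑ j ∈ Finset.range k, nrm (restrF (E j) (xA A)) with hT
  have hTle : T ≤ ∑ i ∈ A, nrm (Finsupp.single i 1) := by
    rw [hT]
    have h1 : ∀ j ∈ Finset.range k, nrm (restrF (E j) (xA A))
        ≤ ∑ i ∈ A ∩ E j, nrm (Finsupp.single i 1) := by
      intro j _
      rw [restr_xA, xA]
      exact nrm_sum_le h _ _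
    calc T ≤ ∑ j ∈ Finset.range k, ∑ i ∈ A ∩ E j, nrm (Finsupp.single i 1) :=
          Finset.sum_le_sum h1
    _ = ∑ i ∈ (Finset.range k).biUnion (fun j => A ∩ E j), nrm (Finsupp.single i 1) := by
          rw [Finset.sum_biUnion]
          intro j1 hj1 j2 hj2 hne12
          exact hdisj j1 (Finset.mem_range.1 hj1) j2 (Finset.mem_range.1 hj2) hne12
    _ ≤ ∑ i ∈ A, nrm (Finsupp.single i 1) := by
          apply Finset.sum_le_sum_of_subset_of_nonneg
          · intro i hi
            obtain ⟨j, _, hij⟩ := Finset.mem_biUnion.1 hi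
            exact (Finset.mem_inter.1 hij).1
          · intro i _ _
            exact nrm_nonneg h _
  have hT0 : 0 ≤ T := by
    rw [hT]
    exact Finset.sum_nonneg (fun j _ => nrm_nonneg h _)
  have hcoeff : 1 / Real.logb 2 ((k:ℝ) + 1) = 1 / L k := rfl
  rw [hcoeff]
  calc (1 / L k) * T ≤ (1 / L 2) * T := by
        apply mul_le_mul_of_nonneg_right _ hT0
        apply one_div_le_one_div_of_le hL2 (L_mono hk)
  _ ≤ (1 / L 2) * (∑ i ∈ A, nrm (Finsupp.single i 1)) := by
        apply mul_le_mul_of_nonneg_left hTle (by positivity)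
  _ = (∑ i ∈ A, nrm (Finsupp.single i 1)) / L 2 := by ring

lemma schl_bddAbove (A : Finset ℕ) : BddAbove (schlumprechtSet nrm (xA A)) :=
  ⟨(∑ i ∈ A, nrm (Finsupp.single i 1)) / L 2, fun r hr => schl_bound h A r hr⟩

omit h in
lemma supNorm_xA_le (A : Finset ℕ) : supNormF (xA A) ≤ 1 := by
  apply ciSup_le
  intro i
  rw [xA_apply]
  by_cases hi : i ∈ A <;> simp [hi]

omit h in
lemma supNorm_single (a : ℕ) : supNormF (Finsupp.single a (1:ℝ)) = 1 := by
  unfold supNormF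
  apply le_antisymm
  · apply ciSup_le
    intro i
    by_cases hi : a = i <;> simp [Finsupp.single_apply, hi]
  · have hb : BddAbove (Set.range fun i => |(Finsupp.single a (1:ℝ)) i|) := by
      refine ⟨1, ?_⟩
      rintro x ⟨i, rfl⟩
      by_cases hi : a = i <;> simp [Finsupp.single_apply, hi]
    have h2 := le_ciSup hb a
    simpa using h2

lemma nrm_single_one (a : ℕ) : nrm (Finsupp.single a (1:ℝ)) = 1 := by
  have heq := h.2.2.2 (Finsupp.single a (1:ℝ))
  have hge : 1 ≤ nrm (Finsupp.single a (1:ℝ)) := by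
    have h1 : supNormF (Finsupp.single a (1:ℝ)) ≤ nrm (Finsupp.single a (1:ℝ)) := by
      rw [heq]; exact le_max_left _ _
    rwa [supNorm_single a] at h1
  have hpos : 0 < nrm (Finsupp.single a (1:ℝ)) := lt_of_lt_of_le one_pos hge
  by_contra hne
  have hgt : 1 < nrm (Finsupp.single a (1:ℝ)) := lt_of_le_of_ne hge (Ne.symm hne)
  have hsS : sSup (schlumprechtSet nrm (Finsupp.single a (1:ℝ)))
      ≤ nrm (Finsupp.single a (1:ℝ)) / L 2 := by
    apply Real.sSup_le
    · intro r hr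
      have := schl_bound h {a} r (by rwa [xA_singleton])
      simpa [xA_singleton] using this
    · exact div_nonneg (nrm_nonneg h _) (L_pos (by norm_num)).le
  have hdiv : nrm (Finsupp.single a (1:ℝ)) / L 2 < nrm (Finsupp.single a (1:ℝ)) :=
    div_lt_self hpos one_lt_L_two
  have : nrm (Finsupp.single a (1:ℝ)) < nrm (Finsupp.single a (1:ℝ)) := by
    conv_lhs => rw [heq]
    rw [supNorm_single a]
    exact max_lt hgt (lt_of_le_of_lt hsS hdiv)
  exact lt_irrefl _ this

end
section Main
variable {nrm : (ℕ →₀ ℝ) → ℝ} (h : IsSchlumprechtNorm nrm)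
include h

lemma main_lemma : ∀ m : ℕ, 1 ≤ m → ∀ A : Finset ℕ, A.card = m → nrm (xA A) = (m:ℝ) / L m := by
  intro m
  induction m using Nat.strong_induction_on with
  | _ m IH =>
    intro hm A hcard
    rcases eq_or_lt_of_le hm with h1 | hm2
    · -- m = 1
      subst h1
      obtain ⟨a, rfl⟩ := Finset.card_eq_one.1 hcard
      rw [xA_singleton, nrm_single_one h, L_one]
      norm_num
    · -- m ≥ 2
      have hLm : 0 < L m := L_pos hm
      have hlenq : (A.sort (· ≤ ·)).length = m := by rw [Finset.length_sort, hcard]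
      -- the splitting into singletons
      set E : ℕ → Finset ℕ :=
        fun j => if hj : j < m then {(A.sort (· ≤ ·)).get ⟨j, hlenq ▸ hj⟩} else {0} with hE
      have hEeq : ∀ j (hj : j < m), E j = {(A.sort (· ≤ ·)).get ⟨j, hlenq ▸ hj⟩} :=
        fun j hj => dif_pos hj
      have hEne : ∀ j < m, (E j).Nonempty := by
        intro j hj; rw [hEeq j hj]; exact ⟨_, Finset.mem_singleton_self _⟩
      have hEord : ∀ j, j + 1 < m → ∀ a ∈ E j, ∀ b ∈ E (j + 1), a < b := by
        intro j hj a ha b hb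
        rw [hEeq j (by omega)] at ha
        rw [hEeq (j+1) hj] at hb
        rw [Finset.mem_singleton] at ha hb
        subst ha; subst hb
        exact (List.sortedLT_iff_pairwise.1 (Finset.sortedLT_sort A)).rel_get_of_lt (by rw [Fin.mk_lt_mk]; omega)
      have hterm : ∀ j ∈ Finset.range m, nrm (restrF (E j) (xA A)) = 1 := by
        intro j hj
        rw [Finset.mem_range] at hj
        have hmem : (A.sort (· ≤ ·)).get ⟨j, hlenq ▸ hj⟩ ∈ A :=
          (Finset.mem_sort (· ≤ ·)).1 (List.get_mem _ _)
        rw [restr_xA, hEeq j hj,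
          Finset.inter_eq_right.2 (Finset.singleton_subset_iff.2 hmem),
          xA_singleton, nrm_single_one h]
      have hmemS : ((m:ℝ) / L m) ∈ schlumprechtSet nrm (xA A) := by
        refine ⟨m, E, hm2, hEne, hEord, ?_⟩
        rw [Finset.sum_congr rfl hterm, Finset.sum_const, Finset.card_range, nsmul_eq_mul,
          mul_one]
        show (m:ℝ) / L m = 1 / L m * (m:ℝ)
        ring
      have hlow : (m:ℝ) / L m ≤ nrm (xA A) := by
        have h1 := le_csSup (schl_bddAbove h A) hmemS
        rw [h.2.2.2 (xA A)]
        exact le_trans h1 (le_max_right _ _)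
      have hone : 1 ≤ (m:ℝ) / L m := by
        rw [le_div_iff₀ hLm]
        simpa using L_le_self hm
      have hup : ∀ r ∈ schlumprechtSet nrm (xA A),
          r ≤ max ((m:ℝ) / L m) (nrm (xA A) / L 2) := by
        rintro r ⟨k, E', hk, hne, hord, rfl⟩
        have hLk : 0 < L k := L_pos (by omega)
        have hdisj := chain_disjoint hne hord A
        by_cases hex : ∃ j0, j0 < k ∧ A ∩ E' j0 = A
        · obtain ⟨j0, hj0k, hj0⟩ := hex
          have hsum : ∑ j ∈ Finset.range k, nrm (restrF (E' j) (xA A)) = nrm (xA A) := by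
            rw [Finset.sum_eq_single_of_mem j0 (Finset.mem_range.2 hj0k)]
            · rw [restr_xA, hj0]
            · intro j hj hjne
              rw [restr_xA]
              have hempty : A ∩ E' j = ∅ := by
                have hd := hdisj j (Finset.mem_range.1 hj) j0 hj0k hjne
                rw [hj0] at hd
                exact Finset.eq_empty_of_forall_notMem (fun x hx =>
                  (Finset.disjoint_left.1 hd) hx (Finset.mem_inter.1 hx).1)
              rw [hempty, xA_empty, nrm_zero h]
          rw [hsum]
          refine le_trans ?_ (le_max_right _ _)
          show 1 / L k * nrm (xA A) ≤ nrm (xA A) / L 2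
          calc 1 / L k * nrm (xA A) ≤ 1 / L 2 * nrm (xA A) := by
                apply mul_le_mul_of_nonneg_right _ (nrm_nonneg h _)
                exact one_div_le_one_div_of_le (L_pos (by norm_num)) (L_mono hk)
          _ = nrm (xA A) / L 2 := by ring
        · push_neg at hex
          have hterm2 : ∀ j ∈ Finset.range k, nrm (restrF (E' j) (xA A))
              = (((A ∩ E' j).card : ℕ) : ℝ) / L ((A ∩ E' j).card) := by
            intro j hj
            rw [restr_xA]
            rcases Nat.eq_zero_or_pos (A ∩ E' j).card with h0 | hpos
            · have he : A ∩ E' j = ∅ := Finset.card_eq_zero.1 h0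
              rw [he, xA_empty, nrm_zero h]
              simp [he]
            · have hlt : (A ∩ E' j).card < m := by
                rw [← hcard]
                apply Finset.card_lt_card
                rw [Finset.ssubset_iff_subset_ne]
                exact ⟨Finset.inter_subset_left, hex j (Finset.mem_range.1 hj)⟩
              exact IH _ hlt hpos _ rfl
          have hcards : ∑ j ∈ Finset.range k, (A ∩ E' j).card ≤ m := by
            rw [← hcard,
              ← Finset.card_biUnion (fun j1 hj1 j2 hj2 hne12 =>
                hdisj j1 (Finset.mem_range.1 hj1) j2 (Finset.mem_range.1 hj2) hne12)]
            apply Finset.card_le_card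
            intro i hi
            obtain ⟨j, _, hij⟩ := Finset.mem_biUnion.1 hi
            exact (Finset.mem_inter.1 hij).1
          have hK := lemmaK hk hm (fun j => (A ∩ E' j).card) hcards
          refine le_trans ?_ (le_max_left _ _)
          show 1 / L k * ∑ j ∈ Finset.range k, nrm (restrF (E' j) (xA A)) ≤ (m:ℝ) / L m
          rw [Finset.sum_congr rfl hterm2]
          calc 1 / L k * ∑ j ∈ Finset.range k, (((A ∩ E' j).card : ℕ) : ℝ) / L ((A ∩ E' j).card)
              ≤ 1 / L k * (L k * ((m:ℝ) / L m)) := by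
                apply mul_le_mul_of_nonneg_left hK (by positivity)
          _ = (m:ℝ) / L m := by field_simp
      have hle : nrm (xA A) ≤ max ((m:ℝ) / L m) (nrm (xA A) / L 2) := by
        refine (h.2.2.2 (xA A)).trans_le (max_le ?_ ?_)
        · exact le_trans (supNorm_xA_le A) (le_trans hone (le_max_left _ _))
        · exact Real.sSup_le hup (le_trans (le_trans zero_le_one hone) (le_max_left _ _))
      rcases le_max_iff.1 hle with hcase | hcase
      · exact le_antisymm hcase hlow
      · exfalso
        have hpos : 0 < nrm (xA A) := lt_of_lt_of_le (lt_of_lt_of_le one_pos hone) hlow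
        have := div_lt_self hpos one_lt_L_two
        linarith

end Main

end SchlAux

theorem schlumprecht_norm_sum_units (nrm : (ℕ →₀ ℝ) → ℝ) (h : IsSchlumprechtNorm nrm)
    (n : ℕ) (hn : 1 ≤ n) :
    nrm (∑ j ∈ Finset.Icc 1 n, Finsupp.single j (1 : ℝ)) = n / Real.logb 2 (n + 1) := by
  have hcard : (Finset.Icc 1 n).card = n := by rw [Nat.card_Icc]; omega
  exact SchlAux.main_lemma h n hn (Finset.Icc 1 n) hcard
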